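/- Extension of the S-Lemma: Let g(x) = xᵀx − 2aᵀx + θ and gᵢ(x) = xᵀx − 2aᵢᵀx + θᵢ, i = 1,…,m. Assume there exists x̄ with gᵢ(x̄) < 0 for all i, and assume either rank{a₁−a, …, aₘ−a} < n, or rank{a₁−a, …, aₘ−a} = n and m = n. Then the system {g(x) > 0, gᵢ(x) ≤ 0 for all i} has no solution if and only if there exist μᵢ ≥ 0, i = 1,…,m, such that −g(x) + Σᵢ μᵢ gᵢ(x) ≥ 0 for all x ∈ ℝⁿ. -/

import Mathlib

open Matrix Finset


lemma dotSelfNonneg {n : ℕ} (x : Fin n → ℝ) : 0 ≤ x ⬝ᵥ x :=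
  Finset.sum_nonneg fun i _ => mul_self_nonneg _

lemma dotSelfPos {n : ℕ} {x : Fin n → ℝ} (hx : x ≠ 0) : 0 < x ⬝ᵥ x := by
  rcases lt_or_eq_of_le (dotSelfNonneg x) with h | h
  · exact h
  · exact absurd (dotProduct_self_eq_zero.1 h.symm) hx

lemma sumDot {n m : ℕ} (s : Finset (Fin m)) (f : Fin m → Fin n → ℝ) (v : Fin n → ℝ) :
    (∑ i ∈ s, f i) ⬝ᵥ v = ∑ i ∈ s, f i ⬝ᵥ v := by
  simp only [dotProduct, Finset.sum_apply, Finset.sum_mul]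
  exact Finset.sum_comm

lemma smulDot {n : ℕ} (t : ℝ) (u v : Fin n → ℝ) : (t • u) ⬝ᵥ v = t * (u ⬝ᵥ v) := by
  rw [smul_dotProduct]; rfl

lemma dotSmul {n : ℕ} (t : ℝ) (u v : Fin n → ℝ) : u ⬝ᵥ (t • v) = t * (u ⬝ᵥ v) := by
  rw [dotProduct_smul]; rfl

/-- Farkas lemma, algebraic form. -/
theorem farkasCone {n : ℕ} {ι : Type} [DecidableEq ι] (I : Finset ι) :
    ∀ (v : ι → Fin n → ℝ) (u : Fin n → ℝ),
    (∀ d, (∀ i ∈ I, v i ⬝ᵥ d ≤ 0) → u ⬝ᵥ d ≤ 0) →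
    ∃ μ : ι → ℝ, (∀ i, 0 ≤ μ i) ∧ (∀ i, i ∉ I → μ i = 0) ∧ u = ∑ i ∈ I, μ i • v i := by
  induction I using Finset.cons_induction with
  | empty =>
    intro v u h
    have h0 : u ⬝ᵥ u ≤ 0 := h u (by simp)
    have : u = 0 := dotProduct_self_eq_zero.1 (le_antisymm h0 (dotSelfNonneg u))
    exact ⟨0, fun i => le_refl _, fun i _ => rfl, by simp [this]⟩
  | cons a s ha ih =>
    intro v u h
    by_cases hs : ∀ d, (∀ i ∈ s, v i ⬝ᵥ d ≤ 0) → u ⬝ᵥ d ≤ 0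
    · obtain ⟨μ, h0, hsup, hrep⟩ := ih v u hs
      refine ⟨μ, h0, fun i hi => hsup i (fun hi' => hi (Finset.mem_cons_of_mem hi')), ?_⟩
      rw [Finset.sum_cons, hsup a ha, zero_smul, zero_add]; exact hrep
    · push_neg at hs
      obtain ⟨d₀, hd₀s, hud₀⟩ := hs
      have hva : 0 < v a ⬝ᵥ d₀ := by
        by_contra hva
        push_neg at hva
        have := h d₀ (fun i hi => by
          rcases Finset.mem_cons.1 hi with rfl | hi
          · exact hva
          · exact hd₀s i hi)
        linarith
      set c := v a ⬝ᵥ d₀ with hc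
      have hcne : c ≠ 0 := ne_of_gt hva
      set v' : ι → Fin n → ℝ := fun i => v i - ((v i ⬝ᵥ d₀) / c) • v a with hv'
      set u' : Fin n → ℝ := u - ((u ⬝ᵥ d₀) / c) • v a with hu'
      have hkey : ∀ w d : Fin n → ℝ,
          (w - ((w ⬝ᵥ d₀) / c) • v a) ⬝ᵥ d = w ⬝ᵥ (d - ((v a ⬝ᵥ d) / c) • d₀) := by
        intro w d
        rw [sub_dotProduct, dotProduct_sub, smulDot, dotSmul]
        field_simp
      have h' : ∀ d, (∀ i ∈ s, v' i ⬝ᵥ d ≤ 0) → u' ⬝ᵥ d ≤ 0 := by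
        intro d hd
        have h1 : ∀ i ∈ Finset.cons a s ha, v i ⬝ᵥ (d - ((v a ⬝ᵥ d) / c) • d₀) ≤ 0 := by
          intro i hi
          rcases Finset.mem_cons.1 hi with rfl | hi
          · rw [dotProduct_sub, dotSmul]
            field_simp
            simp [← hc]
          · rw [← hkey]; exact hd i hi
        rw [hu', hkey]
        exact h _ h1
      obtain ⟨μ, hμ0, hμsup, hμrep⟩ := ih v' u' h'
      set γ : ℝ := (u ⬝ᵥ d₀) / c - ∑ i ∈ s, μ i * ((v i ⬝ᵥ d₀) / c) with hγ
      have hγ0 : 0 ≤ γ := by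
        have hpos : 0 < (u ⬝ᵥ d₀) / c := div_pos hud₀ hva
        have hneg : ∑ i ∈ s, μ i * ((v i ⬝ᵥ d₀) / c) ≤ 0 := by
          apply Finset.sum_nonpos
          intro i hi
          have h1 : v i ⬝ᵥ d₀ ≤ 0 := hd₀s i hi
          have h2 : (v i ⬝ᵥ d₀) / c ≤ 0 := div_nonpos_of_nonpos_of_nonneg h1 (le_of_lt hva)
          exact mul_nonpos_of_nonneg_of_nonpos (hμ0 i) h2
        rw [hγ]; linarith
      refine ⟨fun i => if i = a then γ else μ i, ?_, ?_, ?_⟩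
      · intro i
        by_cases hi : i = a
        · simp [hi, hγ0]
        · simp [hi, hμ0 i]
      · intro i hi
        have hia : i ≠ a := fun h' => hi (h' ▸ Finset.mem_cons_self a s)
        have his : i ∉ s := fun h' => hi (Finset.mem_cons_of_mem h')
        simp [hia, hμsup i his]
      · rw [Finset.sum_cons]
        have hsum : ∀ i ∈ s, (if i = a then γ else μ i) • v i = μ i • v i := by
          intro i hi
          have : i ≠ a := fun h' => ha (h' ▸ hi)
          simp [this]
        have hba : (fun i => if i = a then γ else μ i) a = γ := by simp
        rw [hba, Finset.sum_congr rfl hsum]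
        have h2 : ∑ i ∈ s, μ i • v' i
            = ∑ i ∈ s, μ i • v i - (∑ i ∈ s, μ i * (v i ⬝ᵥ d₀ / c)) • v a := by
          calc ∑ i ∈ s, μ i • v' i
              = ∑ i ∈ s, (μ i • v i - (μ i * (v i ⬝ᵥ d₀ / c)) • v a) := by
                apply Finset.sum_congr rfl
                intro i hi
                rw [hv']
                rw [smul_sub, smul_smul]
            _ = ∑ i ∈ s, μ i • v i - (∑ i ∈ s, μ i * (v i ⬝ᵥ d₀ / c)) • v a := by
                rw [Finset.sum_sub_distrib, Finset.sum_smul]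
        have hexp : u = ∑ i ∈ s, μ i • v i + γ • v a := by
          have h1 : u = u' + ((u ⬝ᵥ d₀) / c) • v a := by rw [hu', sub_add_cancel]
          rw [h1, hμrep, h2, hγ, sub_smul]
          abel
        rw [hexp]
        abel

lemma gordan {n m : ℕ} (I : Finset (Fin m)) (v : Fin m → Fin n → ℝ) :
    (∃ w, ∀ i ∈ I, 1 ≤ v i ⬝ᵥ w) ∨
    (∃ ν : Fin m → ℝ, (∀ i, 0 ≤ ν i) ∧ (∀ i, i ∉ I → ν i = 0) ∧
      ∑ i ∈ I, ν i • v i = 0 ∧ ∑ i ∈ I, ν i = 1) := by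
  classical
  by_cases hF : ∀ dt : Fin (n+1) → ℝ,
      (∀ i ∈ I, (Matrix.vecCons 1 (v i)) ⬝ᵥ dt ≤ 0) → (Matrix.vecCons 1 (0 : Fin n → ℝ)) ⬝ᵥ dt ≤ 0
  · obtain ⟨μ, h0, hsup, hrep⟩ := farkasCone I (fun i => Matrix.vecCons 1 (v i))
      (Matrix.vecCons 1 (0 : Fin n → ℝ)) hF
    right
    have hhead : (1 : ℝ) = ∑ i ∈ I, μ i := by
      have := congrFun hrep 0
      simpa [Finset.sum_apply] using this
    have htail : ∀ j : Fin n, (0 : ℝ) = ∑ i ∈ I, μ i * v i j := by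
      intro j
      have := congrFun hrep j.succ
      simpa [Finset.sum_apply] using this
    refine ⟨μ, h0, hsup, ?_, hhead.symm⟩
    funext j
    have := (htail j).symm
    simpa [Finset.sum_apply] using this
  · left
    push_neg at hF
    obtain ⟨dt, hdt, hpos⟩ := hF
    have hδ : 0 < Matrix.vecHead dt := by
      rw [Matrix.cons_dotProduct, zero_dotProduct] at hpos
      linarith
    refine ⟨(-1 / Matrix.vecHead dt) • Matrix.vecTail dt, fun i hi => ?_⟩
    have h1 := hdt i hi
    rw [Matrix.cons_dotProduct] at h1
    rw [dotProduct_smul]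
    have h2 : v i ⬝ᵥ Matrix.vecTail dt ≤ -Matrix.vecHead dt := by linarith
    rw [smul_eq_mul]
    rw [div_mul_eq_mul_div, le_div_iff₀ hδ]
    nlinarith

lemma farkasAffine {n m : ℕ} (I : Finset (Fin m)) (v : Fin m → Fin n → ℝ) (u : Fin n → ℝ)
    (hP : ∃ w₀, ∀ i ∈ I, 1 ≤ v i ⬝ᵥ w₀)
    (hval : ∀ w, (∀ i ∈ I, 1 ≤ v i ⬝ᵥ w) → 1 ≤ u ⬝ᵥ w) :
    ∃ y : Fin m → ℝ, (∀ i, 0 ≤ y i) ∧ (∀ i, i ∉ I → y i = 0) ∧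
      u = ∑ i ∈ I, y i • v i ∧ 1 ≤ ∑ i ∈ I, y i := by
  classical
  obtain ⟨w₀, hw₀⟩ := hP
  set vt : Option (Fin m) → Fin (n+1) → ℝ :=
    fun j => Option.rec (Matrix.vecCons 1 (0 : Fin n → ℝ)) (fun i => Matrix.vecCons (-1) (v i)) j
    with hvt
  set I' : Finset (Option (Fin m)) := insert none (I.image some) with hI'
  have hF : ∀ dt : Fin (n+1) → ℝ,
      (∀ j ∈ I', vt j ⬝ᵥ dt ≤ 0) → (Matrix.vecCons (-1) u) ⬝ᵥ dt ≤ 0 := by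
    intro dt h
    have hnone : Matrix.vecHead dt ≤ 0 := by
      have := h none (Finset.mem_insert_self _ _)
      rw [hvt] at this
      simp only [Matrix.cons_dotProduct, zero_dotProduct] at this
      linarith
    have hsome : ∀ i ∈ I, v i ⬝ᵥ Matrix.vecTail dt ≤ Matrix.vecHead dt := by
      intro i hi
      have := h (some i) (Finset.mem_insert_of_mem (Finset.mem_image_of_mem some hi))
      rw [hvt] at this
      simp only [Matrix.cons_dotProduct] at this
      linarith
    rw [Matrix.cons_dotProduct]
    rcases lt_or_eq_of_le hnone with hδ | hδ
    · -- vecHead dt < 0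
      have hw : ∀ i ∈ I, 1 ≤ v i ⬝ᵥ ((1 / Matrix.vecHead dt) • Matrix.vecTail dt) := by
        intro i hi
        rw [dotProduct_smul, smul_eq_mul]
        rw [div_mul_eq_mul_div, le_div_iff_of_neg hδ]
        nlinarith [hsome i hi]
      have := hval _ hw
      rw [dotProduct_smul, smul_eq_mul, div_mul_eq_mul_div, le_div_iff_of_neg hδ] at this
      nlinarith
    · -- vecHead dt = 0
      rw [hδ]
      have hd0 : ∀ i ∈ I, v i ⬝ᵥ Matrix.vecTail dt ≤ 0 := by
        intro i hi; have := hsome i hi; rw [hδ] at this; exact this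
      by_contra hcon
      push_neg at hcon
      have hud : 0 < u ⬝ᵥ Matrix.vecTail dt := by linarith
      have hT : 0 < (u ⬝ᵥ w₀) / (u ⬝ᵥ Matrix.vecTail dt) :=
        div_pos (by linarith [hval w₀ hw₀]) hud
      have hw : ∀ i ∈ I, 1 ≤ v i ⬝ᵥ (w₀ - ((u ⬝ᵥ w₀) / (u ⬝ᵥ Matrix.vecTail dt)) • Matrix.vecTail dt) := by
        intro i hi
        rw [dotProduct_sub, dotProduct_smul, smul_eq_mul]
        have h1 := hw₀ i hi
        have h2 := hd0 i hi
        nlinarith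
      have := hval _ hw
      rw [dotProduct_sub, dotProduct_smul, smul_eq_mul, div_mul_cancel₀ _ (ne_of_gt hud)] at this
      linarith
  obtain ⟨μ, h0, hsup, hrep⟩ := farkasCone I' vt (Matrix.vecCons (-1) u) hF
  have hsplit : ∀ f : Option (Fin m) → Fin (n+1) → ℝ,
      ∑ j ∈ I', f j = f none + ∑ i ∈ I, f (some i) := by
    intro f
    rw [hI', Finset.sum_insert (by simp), Finset.sum_image (fun a _ b _ h => Option.some_injective _ h)]
  have hhead := congrFun hrep 0
  rw [hsplit] at hhead
  simp only [Finset.sum_apply, Pi.add_apply, Pi.smul_apply, smul_eq_mul, hvt,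
    Matrix.cons_val_zero, mul_neg, mul_one] at hhead
  have htail : ∀ j : Fin n, u j = ∑ i ∈ I, μ (some i) * v i j := by
    intro j
    have := congrFun hrep j.succ
    rw [hsplit] at this
    simpa [Finset.sum_apply, hvt] using this
  refine ⟨fun i => μ (some i), fun i => h0 _, ?_, ?_, ?_⟩
  · intro i hi
    exact hsup (some i) (by simp [hI', hi])
  · funext j
    rw [Finset.sum_apply]
    simpa using htail j
  · have h1 : 0 ≤ μ none := h0 none
    have h2 : ∑ x ∈ I, -μ (some x) = -∑ x ∈ I, μ (some x) := by
      rw [Finset.sum_neg_distrib]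
    show (1:ℝ) ≤ ∑ i ∈ I, μ (some i)
    linarith [hhead, h2]


lemma existsPerp {n m : ℕ} (f : Fin m → (Fin n → ℝ))
    (h : Module.finrank ℝ (Submodule.span ℝ (Set.range f)) < n) :
    ∃ d : Fin n → ℝ, d ≠ 0 ∧ ∀ i, f i ⬝ᵥ d = 0 := by
  classical
  set M : Matrix (Fin m) (Fin n) ℝ := Matrix.of f with hM
  have hrank : M.rank = Module.finrank ℝ (Submodule.span ℝ (Set.range f)) := by
    rw [← Matrix.rank_transpose]
    rw [Matrix.rank_eq_finrank_span_cols]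
    congr
  have hrn : Module.finrank ℝ (LinearMap.range M.mulVecLin)
      + Module.finrank ℝ (LinearMap.ker M.mulVecLin) = n := by
    rw [LinearMap.finrank_range_add_finrank_ker, Module.finrank_fin_fun]
  have hkerpos : 0 < Module.finrank ℝ (LinearMap.ker M.mulVecLin) := by
    have h2 : Module.finrank ℝ (LinearMap.range M.mulVecLin) = M.rank := rfl
    omega
  have hker : LinearMap.ker M.mulVecLin ≠ ⊥ := by
    intro hbot
    rw [hbot] at hkerpos
    simp at hkerpos
  obtain ⟨d, hdmem, hdne⟩ := Submodule.exists_mem_ne_zero_of_ne_bot hker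
  refine ⟨d, hdne, fun i => ?_⟩
  have : M.mulVecLin d = 0 := LinearMap.mem_ker.1 hdmem
  have h3 : M.mulVec d i = 0 := by rw [← Matrix.mulVecLin_apply, this]; rfl
  exact h3

lemma quadExpand {n : ℕ} (c x0 z : Fin n → ℝ) (co : ℝ) :
    (x0 + z) ⬝ᵥ (x0 + z) - 2 * (c ⬝ᵥ (x0 + z)) + co
      = (x0 ⬝ᵥ x0 - 2 * (c ⬝ᵥ x0) + co) + (2 * ((x0 - c) ⬝ᵥ z) + z ⬝ᵥ z) := by
  rw [add_dotProduct, dotProduct_add, dotProduct_add, dotProduct_add, sub_dotProduct,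
    dotProduct_comm z x0]
  ring

set_option maxHeartbeats 2000000 in
theorem stmt14 (n m : ℕ)
    (a : Fin n → ℝ) (aa : Fin m → (Fin n → ℝ)) (θ : ℝ) (θθ : Fin m → ℝ)
    (g : (Fin n → ℝ) → ℝ) (gg : Fin m → (Fin n → ℝ) → ℝ)
    (hg : ∀ x, g x = x ⬝ᵥ x - 2 * (a ⬝ᵥ x) + θ)
    (hgg : ∀ i x, gg i x = x ⬝ᵥ x - 2 * (aa i ⬝ᵥ x) + θθ i)
    (hslater : ∃ xbar, ∀ i, gg i xbar < 0)
    (hrank : Module.finrank ℝ (Submodule.span ℝ (Set.range fun i => aa i - a)) < n ∨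
      (Module.finrank ℝ (Submodule.span ℝ (Set.range fun i => aa i - a)) = n ∧ m = n)) :
    (¬ ∃ x, 0 < g x ∧ ∀ i, gg i x ≤ 0) ↔
      ∃ μ : Fin m → ℝ, (∀ i, 0 ≤ μ i) ∧ ∀ x, 0 ≤ -g x + ∑ i, μ i * gg i x := by
  classical
  constructor
  · intro hns
    by_cases hm : m = 0
    · subst hm
      refine ⟨0, fun i => le_refl _, fun x => ?_⟩
      have h1 : ¬ (0 < g x) := fun h => hns ⟨x, h, fun i => i.elim0⟩
      push_neg at h1
      simp only [Pi.zero_apply, zero_mul, Finset.sum_const_zero]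
      linarith
    have hmpos : 0 < m := Nat.pos_of_ne_zero hm
    haveI : Nonempty (Fin m) := ⟨⟨0, hmpos⟩⟩
    obtain ⟨xbar, hxbar⟩ := hslater
    set K : Set (Fin n → ℝ) := {x | ∀ i, gg i x ≤ 0} with hKdef
    have hxbarK : xbar ∈ K := fun i => le_of_lt (hxbar i)
    -- continuity
    have hdc : ∀ c : Fin n → ℝ, Continuous (fun x : Fin n → ℝ => c ⬝ᵥ x) := by
      intro c
      show Continuous fun x : Fin n → ℝ => ∑ j, c j * x j
      exact continuous_finset_sum _ fun j _ => continuous_const.mul (continuous_apply j)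
    have hsq : Continuous (fun x : Fin n → ℝ => x ⬝ᵥ x) := by
      show Continuous fun x : Fin n → ℝ => ∑ j, x j * x j
      exact continuous_finset_sum _ fun j _ => (continuous_apply j).mul (continuous_apply j)
    have hgc : Continuous g := by
      have h1 : g = fun x => x ⬝ᵥ x - 2 * (a ⬝ᵥ x) + θ := funext hg
      rw [h1]
      exact (hsq.sub (continuous_const.mul (hdc a))).add continuous_const
    have hggc : ∀ i, Continuous (gg i) := by
      intro i
      have h1 : gg i = fun x => x ⬝ᵥ x - 2 * (aa i ⬝ᵥ x) + θθ i := funext (hgg i)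
      rw [h1]
      exact (hsq.sub (continuous_const.mul (hdc (aa i)))).add continuous_const
    -- compactness
    have hKcl : IsClosed K := by
      have h1 : K = ⋂ i, {x | gg i x ≤ 0} := by ext x; simp [hKdef, Set.mem_iInter]
      rw [h1]
      exact isClosed_iInter fun i => isClosed_le (hggc i) continuous_const
    have hKsub : K ⊆ Metric.closedBall (aa ⟨0, hmpos⟩)
        (Real.sqrt (aa ⟨0, hmpos⟩ ⬝ᵥ aa ⟨0, hmpos⟩ - θθ ⟨0, hmpos⟩)) := by
      intro x hx
      have h1 : gg ⟨0, hmpos⟩ x ≤ 0 := hx ⟨0, hmpos⟩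
      rw [hgg] at h1
      have h2 : (x - aa ⟨0, hmpos⟩) ⬝ᵥ (x - aa ⟨0, hmpos⟩)
          ≤ aa ⟨0, hmpos⟩ ⬝ᵥ aa ⟨0, hmpos⟩ - θθ ⟨0, hmpos⟩ := by
        rw [sub_dotProduct, dotProduct_sub, dotProduct_sub, dotProduct_comm x (aa ⟨0, hmpos⟩)]
        linarith
      rw [Metric.mem_closedBall, dist_pi_le_iff (Real.sqrt_nonneg _)]
      intro j
      rw [Real.dist_eq]
      have h3 : (x j - aa ⟨0, hmpos⟩ j) * (x j - aa ⟨0, hmpos⟩ j)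
          ≤ (x - aa ⟨0, hmpos⟩) ⬝ᵥ (x - aa ⟨0, hmpos⟩) := by
        have := Finset.single_le_sum
          (f := fun j => (x j - aa ⟨0, hmpos⟩ j) * (x j - aa ⟨0, hmpos⟩ j))
          (fun j _ => mul_self_nonneg _) (Finset.mem_univ j)
        simpa [dotProduct] using this
      calc |x j - aa ⟨0, hmpos⟩ j| = Real.sqrt ((x j - aa ⟨0, hmpos⟩ j) * (x j - aa ⟨0, hmpos⟩ j)) := by
            rw [← Real.sqrt_mul_self_eq_abs]
        _ ≤ _ := Real.sqrt_le_sqrt (by linarith)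
    have hKcomp : IsCompact K :=
      IsCompact.of_isClosed_subset (isCompact_closedBall _ _) hKcl hKsub
    obtain ⟨xs, hxsK, hmax⟩ := hKcomp.exists_isMaxOn ⟨xbar, hxbarK⟩ hgc.continuousOn
    have hxsK' : ∀ i, gg i xs ≤ 0 := hxsK
    have hvs : g xs ≤ 0 := by
      by_contra h
      push_neg at h
      exact hns ⟨xs, h, hxsK'⟩
    obtain ⟨u, hu⟩ : ∃ u, u = xs - a := ⟨_, rfl⟩
    obtain ⟨v, hv⟩ : ∃ v : Fin m → Fin n → ℝ, v = fun i => xs - aa i := ⟨_, rfl⟩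
    have gE : ∀ z, g (xs + z) = g xs + (2 * (u ⬝ᵥ z) + z ⬝ᵥ z) := by
      intro z
      rw [hg, hg, hu]
      exact quadExpand a xs z θ
    have ggE : ∀ i z, gg i (xs + z) = gg i xs + (2 * (v i ⬝ᵥ z) + z ⬝ᵥ z) := by
      intro i z
      rw [hgg, hgg, hv]
      exact quadExpand (aa i) xs z (θθ i)
    have hni : ∀ z, xs + z ∈ K → 2 * (u ⬝ᵥ z) + z ⬝ᵥ z ≤ 0 := by
      intro z hz
      have h1 : g (xs + z) ≤ g xs := hmax hz
      rw [gE z] at h1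
      linarith
    have hKmem : ∀ z, (∀ i, gg i xs + (2 * (v i ⬝ᵥ z) + z ⬝ᵥ z) ≤ 0) → xs + z ∈ K := by
      intro z h i
      rw [ggE i z]
      exact h i
    obtain ⟨I, hI⟩ : ∃ I : Finset (Fin m), I = Finset.univ.filter (fun i => gg i xs = 0) := ⟨_, rfl⟩
    have hIact : ∀ i ∈ I, gg i xs = 0 := by
      intro i hi
      rw [hI] at hi
      exact (Finset.mem_filter.1 hi).2
    have hInact : ∀ i ∉ I, gg i xs < 0 := by
      intro i hi
      rcases lt_or_eq_of_le (hxsK' i) with h1 | h1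
      · exact h1
      · exact absurd (by rw [hI]; exact Finset.mem_filter.2 ⟨Finset.mem_univ i, h1⟩) hi
    -- KKT
    have hKKT : ∀ d, (∀ i ∈ I, v i ⬝ᵥ d ≤ 0) → u ⬝ᵥ d ≤ 0 := by
      intro d hd
      by_contra hud
      push_neg at hud
      obtain ⟨cb, hcb⟩ : ∃ cb, cb = xbar - xs := ⟨_, rfl⟩
      have hxbz : xbar = xs + cb := by rw [hcb]; abel
      have hcbI : ∀ i ∈ I, v i ⬝ᵥ cb < 0 := by
        intro i hi
        have h1 : gg i xbar = gg i xs + (2 * (v i ⬝ᵥ cb) + cb ⬝ᵥ cb) := by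
          rw [hxbz]; exact ggE i cb
        have h2 := hxbar i
        have h3 := hIact i hi
        have h4 := dotSelfNonneg cb
        linarith
      obtain ⟨ρ, hρ0, hρ⟩ : ∃ ρ : ℝ, 0 < ρ ∧ 0 < u ⬝ᵥ d + ρ * (u ⬝ᵥ cb) := by
        by_cases hq : u ⬝ᵥ cb < 0
        · refine ⟨(u ⬝ᵥ d) / (2 * (-(u ⬝ᵥ cb))), div_pos hud (by linarith), ?_⟩
          have hqne : u ⬝ᵥ cb ≠ 0 := ne_of_lt hq
          have h5 : (u ⬝ᵥ d) / (2 * (-(u ⬝ᵥ cb))) * (u ⬝ᵥ cb) = -((u ⬝ᵥ d) / 2) := by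
            field_simp
          rw [h5]
          linarith
        · push_neg at hq
          exact ⟨1, one_pos, by nlinarith⟩
      obtain ⟨d', hd'⟩ : ∃ d', d' = d + ρ • cb := ⟨_, rfl⟩
      have hud' : 0 < u ⬝ᵥ d' := by
        rw [hd', dotProduct_add, dotSmul]
        exact hρ
      have hd'I : ∀ i ∈ I, v i ⬝ᵥ d' < 0 := by
        intro i hi
        rw [hd', dotProduct_add, dotSmul]
        have h5 := hd i hi
        have h6 := mul_neg_of_pos_of_neg hρ0 (hcbI i hi)
        linarith
      have hd'ne : d' ≠ 0 := by
        intro h0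
        rw [h0, dotProduct_zero] at hud'
        exact lt_irrefl 0 hud'
      have hE : 0 < d' ⬝ᵥ d' := dotSelfPos hd'ne
      obtain ⟨Bd, hBd⟩ : ∃ Bd : Fin m → ℝ, Bd = fun i =>
          if i ∈ I then (-(2 * (v i ⬝ᵥ d'))) / (d' ⬝ᵥ d')
          else (-(gg i xs)) / (1 + 2 * |v i ⬝ᵥ d'| + d' ⬝ᵥ d') := ⟨_, rfl⟩
      have hBdpos : ∀ i, 0 < Bd i := by
        intro i
        simp only [hBd]
        by_cases hi : i ∈ I
        · rw [if_pos hi]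
          exact div_pos (by linarith [hd'I i hi]) hE
        · rw [if_neg hi]
          exact div_pos (by linarith [hInact i hi]) (by positivity)
      obtain ⟨t, ht⟩ : ∃ t : ℝ, t = min 1 (Finset.univ.inf' Finset.univ_nonempty Bd) := ⟨_, rfl⟩
      have ht0 : 0 < t := by
        rw [ht]
        apply lt_min one_pos
        rw [Finset.lt_inf'_iff]
        exact fun i _ => hBdpos i
      have ht1 : t ≤ 1 := by rw [ht]; exact min_le_left _ _
      have htB : ∀ i, t ≤ Bd i := by
        intro i
        rw [ht]
        exact le_trans (min_le_right _ _) (Finset.inf'_le _ (Finset.mem_univ i))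
      have hmem : xs + t • d' ∈ K := by
        apply hKmem
        intro i
        rw [dotSmul, smulDot, dotSmul]
        by_cases hi : i ∈ I
        · rw [hIact i hi]
          have h3 := htB i
          simp only [hBd] at h3
          rw [if_pos hi, le_div_iff₀ hE] at h3
          nlinarith [ht0]
        · have h3 := htB i
          simp only [hBd] at h3
          rw [if_neg hi, le_div_iff₀ (by positivity : (0:ℝ) < 1 + 2 * |v i ⬝ᵥ d'| + d' ⬝ᵥ d')] at h3
          have habs : v i ⬝ᵥ d' ≤ |v i ⬝ᵥ d'| := le_abs_self _
          have habs0 : 0 ≤ |v i ⬝ᵥ d'| := abs_nonneg _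
          have p1 : 2 * (t * (v i ⬝ᵥ d')) ≤ 2 * (t * |v i ⬝ᵥ d'|) := by nlinarith [ht0]
          have p2 : t * (t * (d' ⬝ᵥ d')) ≤ t * (d' ⬝ᵥ d') := by
            nlinarith [mul_nonneg (mul_nonneg (sub_nonneg.2 ht1) ht0.le) hE.le]
          linarith
      have hcon := hni (t • d') hmem
      rw [dotSmul, smulDot, dotSmul] at hcon
      nlinarith [mul_pos ht0 hud', mul_pos ht0 (mul_pos ht0 hE)]
    obtain ⟨μ0, hμ00, hμ0sup, hμ0rep⟩ := farkasCone I v u hKKT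
    by_cases hrep : ∃ μ : Fin m → ℝ, (∀ i, 0 ≤ μ i) ∧ (∀ i, i ∉ I → μ i = 0) ∧
        u = ∑ i ∈ I, μ i • v i ∧ 1 ≤ ∑ i ∈ I, μ i
    · -- certificate
      obtain ⟨μ, hc0, hcsup, hcrep, hcsum⟩ := hrep
      refine ⟨μ, hc0, fun x => ?_⟩
      obtain ⟨z, hzdef⟩ : ∃ z, z = x - xs := ⟨_, rfl⟩
      have hxz : x = xs + z := by rw [hzdef]; abel
      have hgx : g x = g xs + (2 * (u ⬝ᵥ z) + z ⬝ᵥ z) := by rw [hxz]; exact gE z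
      have hggx : ∀ i, gg i x = gg i xs + (2 * (v i ⬝ᵥ z) + z ⬝ᵥ z) := by
        intro i; rw [hxz]; exact ggE i z
      have hs1 : ∑ i, μ i * gg i x
          = ∑ i, μ i * gg i xs + (2 * (∑ i, μ i * (v i ⬝ᵥ z)) + (∑ i, μ i) * (z ⬝ᵥ z)) := by
        have h5 : ∀ i, μ i * gg i x = μ i * gg i xs + (2 * (μ i * (v i ⬝ᵥ z)) + μ i * (z ⬝ᵥ z)) := by
          intro i; rw [hggx i]; ring
        rw [Finset.sum_congr rfl (fun i _ => h5 i), Finset.sum_add_distrib, Finset.sum_add_distrib,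
          ← Finset.mul_sum, ← Finset.sum_mul]
      have hs2 : ∑ i, μ i * gg i xs = 0 := by
        apply Finset.sum_eq_zero
        intro i _
        by_cases hi : i ∈ I
        · rw [hIact i hi, mul_zero]
        · rw [hcsup i hi, zero_mul]
      have hs3 : ∑ i, μ i * (v i ⬝ᵥ z) = u ⬝ᵥ z := by
        have h4 : ∑ i ∈ I, μ i * (v i ⬝ᵥ z) = u ⬝ᵥ z := by
          conv_rhs => rw [hcrep]
          rw [sumDot]
          apply Finset.sum_congr rfl
          intro i _
          rw [smulDot]
        rw [← h4]
        apply (Finset.sum_subset (Finset.subset_univ I) ?_).symm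
        intro i _ hi
        rw [hcsup i hi, zero_mul]
      have hs4 : ∑ i ∈ I, μ i ≤ ∑ i, μ i := by
        apply Finset.sum_le_sum_of_subset_of_nonneg (Finset.subset_univ I)
        intro i _ _
        exact hc0 i
      have hs5 : 0 ≤ (∑ i, μ i - 1) * (z ⬝ᵥ z) :=
        mul_nonneg (by linarith) (dotSelfNonneg z)
      rw [hs1, hs2, hs3, hgx]
      nlinarith [hs5]
    · exfalso
      have hlam0 : ∑ i ∈ I, μ0 i < 1 := by
        by_contra hc
        push_neg at hc
        exact hrep ⟨μ0, hμ00, hμ0sup, hμ0rep, hc⟩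
      have hlam0nn : 0 ≤ ∑ i ∈ I, μ0 i := Finset.sum_nonneg fun i _ => hμ00 i
      have curve : ∀ d : Fin n → ℝ, d ≠ 0 → (∀ i ∈ I, v i ⬝ᵥ d = 0) → False := by
        intro d hdne hdI
        have hud : u ⬝ᵥ d = 0 := by
          rw [hμ0rep, sumDot]
          apply Finset.sum_eq_zero
          intro i hi
          rw [smulDot, hdI i hi, mul_zero]
        rcases gordan I v with ⟨w₀, hw₀⟩ | ⟨ν, hν0, hνsup, hνrep, hνsum⟩
        swap
        · apply hrep
          refine ⟨fun i => μ0 i + ν i, fun i => add_nonneg (hμ00 i) (hν0 i),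
            fun i hi => by show μ0 i + ν i = 0; rw [hμ0sup i hi, hνsup i hi, add_zero], ?_, ?_⟩
          · have h1 : ∀ i ∈ I, (μ0 i + ν i) • v i = μ0 i • v i + ν i • v i :=
              fun i _ => add_smul _ _ _
            rw [Finset.sum_congr rfl h1, Finset.sum_add_distrib, hνrep, add_zero]
            exact hμ0rep
          · rw [Finset.sum_add_distrib, hνsum]
            linarith [hlam0nn]
        · by_cases hval : ∀ w, (∀ i ∈ I, 1 ≤ v i ⬝ᵥ w) → 1 ≤ u ⬝ᵥ w
          · obtain ⟨y, hy0, hysup, hyrep, hysum⟩ := farkasAffine I v u ⟨w₀, hw₀⟩ hval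
            exact hrep ⟨y, hy0, hysup, hyrep, hysum⟩
          · push_neg at hval
            obtain ⟨w, hwI, hwu⟩ := hval
            obtain ⟨ε, hεpos, hεq⟩ : ∃ ε : ℝ, 0 < ε ∧ (1 + ε) * (u ⬝ᵥ w) < 1 := by
              by_cases hq : u ⬝ᵥ w ≤ 0
              · exact ⟨1, one_pos, by nlinarith⟩
              · push_neg at hq
                refine ⟨(1 - u ⬝ᵥ w) / (2 * (u ⬝ᵥ w)), div_pos (by linarith) (by linarith), ?_⟩
                have h1 : (1 + (1 - u ⬝ᵥ w) / (2 * (u ⬝ᵥ w))) * (u ⬝ᵥ w) = (u ⬝ᵥ w + 1) / 2 := by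
                  field_simp
                  ring
                rw [h1]
                linarith
            have hD0 : 0 < d ⬝ᵥ d := dotSelfPos hdne
            obtain ⟨f, hf⟩ : ∃ f, f = (-((1 + ε) * (d ⬝ᵥ d) / 2)) • w := ⟨_, rfl⟩
            have hvf : ∀ i ∈ I, 2 * (v i ⬝ᵥ f) ≤ -((1 + ε) * (d ⬝ᵥ d)) := by
              intro i hi
              rw [hf, dotSmul]
              have h1 := hwI i hi
              nlinarith [mul_nonneg (mul_pos (by linarith : (0:ℝ) < 1 + ε) hD0).le
                (by linarith : (0:ℝ) ≤ v i ⬝ᵥ w - 1)]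
            have huf : -(d ⬝ᵥ d) < 2 * (u ⬝ᵥ f) := by
              rw [hf, dotSmul]
              nlinarith [hεq, hD0]
            have hff : 0 ≤ f ⬝ᵥ f := dotSelfNonneg f
            have habsdf : 0 ≤ |d ⬝ᵥ f| := abs_nonneg _
            have hC1 : (0:ℝ) < 1 + 2 * |d ⬝ᵥ f| + f ⬝ᵥ f := by positivity
            obtain ⟨Bd, hBd⟩ : ∃ Bd : Fin m → ℝ, Bd = fun i =>
                if i ∈ I then (1:ℝ)
                else (-(gg i xs)) / (1 + (2 * |v i ⬝ᵥ d| + 2 * |v i ⬝ᵥ f| + d ⬝ᵥ d + 2 * |d ⬝ᵥ f| + f ⬝ᵥ f)) := ⟨_, rfl⟩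
            have hBdpos : ∀ i, 0 < Bd i := by
              intro i
              simp only [hBd]
              by_cases hi : i ∈ I
              · rw [if_pos hi]; exact one_pos
              · rw [if_neg hi]
                apply div_pos (by linarith [hInact i hi])
                positivity
            obtain ⟨t, ht⟩ : ∃ t : ℝ,
                t = min (min 1 ((ε * (d ⬝ᵥ d)) / (1 + 2 * |d ⬝ᵥ f| + f ⬝ᵥ f)))
                  (min ((2 * (u ⬝ᵥ f) + d ⬝ᵥ d) / (1 + 2 * |d ⬝ᵥ f| + f ⬝ᵥ f))
                    (Finset.univ.inf' Finset.univ_nonempty Bd)) := ⟨_, rfl⟩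
            have ht0 : 0 < t := by
              rw [ht]
              apply lt_min (lt_min one_pos (by positivity))
              apply lt_min (div_pos (by linarith) hC1)
              rw [Finset.lt_inf'_iff]
              exact fun i _ => hBdpos i
            have ht1 : t ≤ 1 := by
              rw [ht]
              exact le_trans (min_le_left _ _) (min_le_left _ _)
            have hteD : t * (1 + 2 * |d ⬝ᵥ f| + f ⬝ᵥ f) ≤ ε * (d ⬝ᵥ d) := by
              have h1 : t ≤ (ε * (d ⬝ᵥ d)) / (1 + 2 * |d ⬝ᵥ f| + f ⬝ᵥ f) := by
                rw [ht]
                exact le_trans (min_le_left _ _) (min_le_right _ _)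
              rwa [le_div_iff₀ hC1] at h1
            have htd0 : t * (1 + 2 * |d ⬝ᵥ f| + f ⬝ᵥ f) ≤ 2 * (u ⬝ᵥ f) + d ⬝ᵥ d := by
              have h1 : t ≤ (2 * (u ⬝ᵥ f) + d ⬝ᵥ d) / (1 + 2 * |d ⬝ᵥ f| + f ⬝ᵥ f) := by
                rw [ht]
                exact le_trans (min_le_right _ _) (min_le_left _ _)
              rwa [le_div_iff₀ hC1] at h1
            have htB : ∀ i, t ≤ Bd i := by
              intro i
              rw [ht]
              exact le_trans (min_le_right _ _)
                (le_trans (min_le_right _ _) (Finset.inf'_le _ (Finset.mem_univ i)))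
            obtain ⟨z, hz⟩ : ∃ z, z = t • d + (t * t) • f := ⟨_, rfl⟩
            have hdotz : ∀ c : Fin n → ℝ, c ⬝ᵥ z = t * (c ⬝ᵥ d) + (t * t) * (c ⬝ᵥ f) := by
              intro c
              rw [hz, dotProduct_add, dotSmul, dotSmul]
            have hzz : z ⬝ᵥ z = t * t * (d ⬝ᵥ d) + 2 * (t * t * t) * (d ⬝ᵥ f)
                + (t * t * (t * t)) * (f ⬝ᵥ f) := by
              rw [hz, add_dotProduct, dotProduct_add, dotProduct_add]
              simp only [smulDot, dotSmul]
              rw [dotProduct_comm f d]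
              ring
            have s0 : (0:ℝ) ≤ t * t := mul_nonneg ht0.le ht0.le
            have ht3 : (0:ℝ) < t * t * t := by positivity
            have htt1 : t * t ≤ t := by nlinarith [ht0, ht1]
            have httt1 : t * t * t ≤ t := by nlinarith [ht0, ht1]
            have htttt : t * t * (t * t) ≤ t * t * t := by nlinarith [ht0, ht1]
            have hmem : xs + z ∈ K := by
              apply hKmem
              intro i
              rw [hdotz (v i), hzz]
              by_cases hi : i ∈ I
              · rw [hIact i hi, hdI i hi]
                have h1 := hvf i hi
                have F1 : t * t * (2 * (v i ⬝ᵥ f)) ≤ t * t * (-((1 + ε) * (d ⬝ᵥ d))) :=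
                  mul_le_mul_of_nonneg_left h1 s0
                have F2 : 2 * (t * t * t) * (d ⬝ᵥ f) ≤ 2 * (t * t * t) * |d ⬝ᵥ f| :=
                  mul_le_mul_of_nonneg_left (le_abs_self _) (by positivity)
                have F3 : (t * t * (t * t)) * (f ⬝ᵥ f) ≤ (t * t * t) * (f ⬝ᵥ f) :=
                  mul_le_mul_of_nonneg_right htttt hff
                have F4 : t * t * (t * (1 + 2 * |d ⬝ᵥ f| + f ⬝ᵥ f)) ≤ t * t * (ε * (d ⬝ᵥ d)) :=
                  mul_le_mul_of_nonneg_left hteD s0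
                nlinarith [F1, F2, F3, F4, ht3]
              · have h3 := htB i
                simp only [hBd] at h3
                rw [if_neg hi, le_div_iff₀ (by positivity)] at h3
                have habs1 : 0 ≤ |v i ⬝ᵥ d| := abs_nonneg _
                have habs2 : 0 ≤ |v i ⬝ᵥ f| := abs_nonneg _
                have G1 : t * (v i ⬝ᵥ d) ≤ t * |v i ⬝ᵥ d| :=
                  mul_le_mul_of_nonneg_left (le_abs_self _) ht0.le
                have G2 : (t * t) * (v i ⬝ᵥ f) ≤ (t * t) * |v i ⬝ᵥ f| :=
                  mul_le_mul_of_nonneg_left (le_abs_self _) s0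
                have G2' : (t * t) * |v i ⬝ᵥ f| ≤ t * |v i ⬝ᵥ f| :=
                  mul_le_mul_of_nonneg_right htt1 habs2
                have G3 : t * t * (d ⬝ᵥ d) ≤ t * (d ⬝ᵥ d) :=
                  mul_le_mul_of_nonneg_right htt1 hD0.le
                have G4 : 2 * (t * t * t) * (d ⬝ᵥ f) ≤ 2 * (t * t * t) * |d ⬝ᵥ f| :=
                  mul_le_mul_of_nonneg_left (le_abs_self _) (by positivity)
                have G4' : (t * t * t) * |d ⬝ᵥ f| ≤ t * |d ⬝ᵥ f| :=
                  mul_le_mul_of_nonneg_right httt1 habsdf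
                have G5 : (t * t * (t * t)) * (f ⬝ᵥ f) ≤ (t * t * t) * (f ⬝ᵥ f) :=
                  mul_le_mul_of_nonneg_right htttt hff
                have G5' : (t * t * t) * (f ⬝ᵥ f) ≤ t * (f ⬝ᵥ f) :=
                  mul_le_mul_of_nonneg_right httt1 hff
                linarith [h3, G1, G2, G2', G3, G4, G4', G5, G5', ht0]
            have hcon := hni z hmem
            rw [hdotz u, hud, hzz] at hcon
            have G1 : t * t * (t * (1 + 2 * |d ⬝ᵥ f| + f ⬝ᵥ f))
                ≤ t * t * (2 * (u ⬝ᵥ f) + d ⬝ᵥ d) := mul_le_mul_of_nonneg_left htd0 s0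
            have G2 : -(2 * (t * t * t) * |d ⬝ᵥ f|) ≤ 2 * (t * t * t) * (d ⬝ᵥ f) := by
              have := mul_le_mul_of_nonneg_left (neg_abs_le (d ⬝ᵥ f)) (by positivity : (0:ℝ) ≤ 2 * (t * t * t))
              linarith [this]
            have G3 : (0:ℝ) ≤ (t * t * (t * t)) * (f ⬝ᵥ f) := by positivity
            have G4 : (0:ℝ) ≤ (t * t * t) * (f ⬝ᵥ f) := by positivity
            nlinarith [G1, G2, G3, G4, ht3, hcon]
      rcases hrank with hlt | ⟨hfr, hmn⟩
      · obtain ⟨d0, hd0ne, hd0⟩ := existsPerp (fun i => aa i - a) hlt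
        have hvu : ∀ i, v i ⬝ᵥ d0 = u ⬝ᵥ d0 := by
          intro i
          have h2 : (aa i - a) ⬝ᵥ d0 = 0 := hd0 i
          have h3 : v i ⬝ᵥ d0 - u ⬝ᵥ d0 = -((aa i - a) ⬝ᵥ d0) := by
            rw [← sub_dotProduct, ← neg_dotProduct]
            congr 1
            rw [hu, hv]
            funext j
            simp
          rw [h2, neg_zero] at h3
          linarith
        have hβ : u ⬝ᵥ d0 = 0 := by
          have h1 : u ⬝ᵥ d0 = (∑ i ∈ I, μ0 i) * (u ⬝ᵥ d0) := by
            conv_lhs => rw [hμ0rep]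
            rw [sumDot, Finset.sum_mul]
            apply Finset.sum_congr rfl
            intro i hi
            rw [smulDot, hvu i]
          have h3 : (1 - ∑ i ∈ I, μ0 i) * (u ⬝ᵥ d0) = 0 := by ring_nf; linarith [h1]
          rcases mul_eq_zero.1 h3 with h4 | h4
          · linarith
          · exact h4
        exact curve d0 hd0ne (fun i _ => by rw [hvu i, hβ])
      · by_cases hD : ∃ d, d ≠ 0 ∧ ∀ i ∈ I, v i ⬝ᵥ d = 0
        · obtain ⟨d, h1, h2⟩ := hD
          exact curve d h1 h2
        · push_neg at hD
          subst hmn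
          have hinj : Function.Injective (Matrix.of v).mulVecLin := by
            rw [← LinearMap.ker_eq_bot, Submodule.eq_bot_iff]
            intro w hw
            by_contra hwne
            obtain ⟨i, hiI, hine⟩ := hD w hwne
            apply hine
            have h1 : (Matrix.of v).mulVecLin w = 0 := LinearMap.mem_ker.1 hw
            have h2 := congrFun h1 i
            exact h2
          obtain ⟨w, hw⟩ := LinearMap.injective_iff_surjective.1 hinj (fun _ => (1:ℝ))
          have hvw : ∀ i, v i ⬝ᵥ w = 1 := by
            intro i
            exact congrFun hw i
          have hwne : w ≠ 0 := by
            intro h0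
            have h1 := hvw ⟨0, hmpos⟩
            rw [h0, dotProduct_zero] at h1
            norm_num at h1
          have hww : 0 < w ⬝ᵥ w := dotSelfPos hwne
          obtain ⟨α, hα⟩ : ∃ α : ℝ, α = 2 / (w ⬝ᵥ w) := ⟨_, rfl⟩
          have hαpos : 0 < α := by rw [hα]; positivity
          have hkey : 2 * (-α) + α * α * (w ⬝ᵥ w) = 0 := by
            rw [hα]
            field_simp
            ring
          have hmem : xs + (-α) • w ∈ K := by
            apply hKmem
            intro i
            rw [dotSmul, smulDot, dotSmul, hvw i]
            have h1 := hxsK' i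
            nlinarith [hkey]
          have hcon := hni ((-α) • w) hmem
          rw [dotSmul, smulDot, dotSmul] at hcon
          have huw : u ⬝ᵥ w = ∑ i ∈ I, μ0 i := by
            conv_lhs => rw [hμ0rep]
            rw [sumDot]
            exact Finset.sum_congr rfl (fun i _ => by rw [smulDot, hvw i, mul_one])
          rw [huw] at hcon
          nlinarith [hαpos, hlam0, hkey]
  · rintro ⟨μ, hμ0, hcert⟩ ⟨x, hgx, hggx⟩
    have h1 := hcert x
    have h2 : ∑ i, μ i * gg i x ≤ 0 :=
      Finset.sum_nonpos fun i _ => mul_nonpos_of_nonneg_of_nonpos (hμ0 i) (hggx i)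
    linarith
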